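/- arXiv:1405.1484 — 2 statements merged into one kernel-verified Lean document; each statement's English description precedes it below -/
import Mathlib

section
/- Let n ≥ 3 be a prime and let G be the graph of Construction 1. Fix l ∈ [n] and consider the family 𝓕_l consisting of the n² vertex sets N_G(w) ∩ P^l for w ∈ Q and N_G(s) ∩ P^l for s ∈ S. Then each member of 𝓕_l has exactly n vertices and induces a complete graph K_n in G², and any two distinct members of 𝓕_l intersect in at most one vertex (so the corresponding cliques of G² are pairwise edge-disjoint). -/
open SimpleGraph

/-- Entry of the Latin square `L_i`:  `L_i(j,k) ≡ j + i·(k-1) (mod n)`, with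
indices and entries taken in `ZMod n` (identifying `[n] = {1,…,n}` with `ZMod n`). -/
def latinL (n : ℕ) (i j k : ZMod n) : ZMod n := j + i * (k - 1)

/-- The vertices of the graph `G` of Construction 1:
`pv k m l` is `v_{k,m}^l ∈ P`, `qv i j` is `w_{i,j} ∈ Q` (with `i ≠ 0`, i.e. `i ∈ [n-1]`),
`rv i j` is `u_{i,j} ∈ R`, and `sv m` is `s_m ∈ S`. -/
inductive Vert (n : ℕ) : Type
  | pv (k m l : ZMod n) : Vert n
  | qv (i : {x : ZMod n // x ≠ 0}) (j : ZMod n) : Vert n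
  | rv (i : {x : ZMod n // x ≠ 0}) (j : ZMod n) : Vert n
  | sv (m : ZMod n) : Vert n

/-- One-directional description of the edges of Construction 1:
`w_{i,j}` is adjacent to `v_{k, L_i(j,k)}^l` for all `k, l`;
`u_{i,j}` is adjacent to every vertex of `T_{l, L_i(j,l)}` for every `l`;
`s_m` is adjacent to every vertex of `T_{l,m}` for every `l`. -/
def rel {n : ℕ} : Vert n → Vert n → Prop
  | .qv i j, .pv k m _ => m = latinL n i.1 j k
  | .rv i j, .pv _ m l => m = latinL n i.1 j l
  | .sv m', .pv _ m _ => m = m'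
  | _, _ => False

/-- The bipartite graph `G` of Construction 1. -/
def GraphG (n : ℕ) : SimpleGraph (Vert n) where
  Adj x y := rel x y ∨ rel y x
  symm := ⟨fun _ _ h => h.symm⟩
  loopless := by constructor; intro x h; cases x <;> simp [rel] at h

/-- The square `G²` of a graph `G`: two distinct vertices are adjacent iff
their distance in `G` is at most 2 (i.e. they are adjacent or have a common neighbor). -/
def square {V : Type*} (G : SimpleGraph V) : SimpleGraph V where
  Adj x y := x ≠ y ∧ (G.Adj x y ∨ ∃ z, G.Adj x z ∧ G.Adj z y)
  symm := by
    constructor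
    rintro x y ⟨hxy, h | ⟨z, h1, h2⟩⟩
    · exact ⟨hxy.symm, Or.inl h.symm⟩
    · exact ⟨hxy.symm, Or.inr ⟨z, h2.symm, h1.symm⟩⟩
  loopless := ⟨fun x h => h.1 rfl⟩

/-- `P_k^l = {v_{k,1}^l, …, v_{k,n}^l}`. -/
def Pkl (n : ℕ) (k l : ZMod n) : Set (Vert n) := {x | ∃ m, x = Vert.pv k m l}

/-- `P^l = P_1^l ∪ ⋯ ∪ P_n^l`. -/
def PlSet (n : ℕ) (l : ZMod n) : Set (Vert n) := {x | ∃ k m, x = Vert.pv k m l}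

/-- `P = P^1 ∪ ⋯ ∪ P^n`. -/
def Pset (n : ℕ) : Set (Vert n) := {x | ∃ k m l, x = Vert.pv k m l}

/-- `T_{l,m} = {v_{1,m}^l, …, v_{n,m}^l}`. -/
def Tlm (n : ℕ) (l m : ZMod n) : Set (Vert n) := {x | ∃ k, x = Vert.pv k m l}

/-- `Q_i = {w_{i,1}, …, w_{i,n}}`. -/
def QiSet (n : ℕ) (i : {x : ZMod n // x ≠ 0}) : Set (Vert n) := {x | ∃ j, x = Vert.qv i j}

/-- `Q = Q_1 ∪ ⋯ ∪ Q_{n-1}`. -/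
def Qset (n : ℕ) : Set (Vert n) := {x | ∃ i j, x = Vert.qv i j}

/-- `R_i = {u_{i,1}, …, u_{i,n}}`. -/
def RiSet (n : ℕ) (i : {x : ZMod n // x ≠ 0}) : Set (Vert n) := {x | ∃ j, x = Vert.rv i j}

/-- `R = R_1 ∪ ⋯ ∪ R_{n-1}`. -/
def Rset (n : ℕ) : Set (Vert n) := {x | ∃ i j, x = Vert.rv i j}

/-- `S = {s_1, …, s_n}`. -/
def Sset (n : ℕ) : Set (Vert n) := {x | ∃ m, x = Vert.sv m}

/-- `G_l`, the subgraph of `G` induced by `P^l ∪ Q` (kept on the same vertex type: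
all edges of `G` with both endpoints in `P^l ∪ Q`). -/
def Gl (n : ℕ) (l : ZMod n) : SimpleGraph (Vert n) where
  Adj x y := (GraphG n).Adj x y ∧ x ∈ PlSet n l ∪ Qset n ∧ y ∈ PlSet n l ∪ Qset n
  symm := ⟨fun _ _ ⟨h, hx, hy⟩ => ⟨h.symm, hy, hx⟩⟩
  loopless := ⟨fun x h => (GraphG n).loopless.irrefl x h.1⟩

/-- `G` is `k`-choosable: for every list assignment with all lists of size at least `k`
there is a proper coloring choosing each color from the corresponding list. -/
def Choosable {V : Type*} (G : SimpleGraph V) (k : ℕ) : Prop :=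
  ∀ L : V → Finset ℕ, (∀ v, k ≤ (L v).card) →
    ∃ φ : V → ℕ, (∀ v, φ v ∈ L v) ∧ ∀ ⦃v w⦄, G.Adj v w → φ v ≠ φ w

/-- The list chromatic number `χ_ℓ(G)`: the least `k` such that `G` is `k`-choosable. -/
noncomputable def listChromaticNumber {V : Type*} (G : SimpleGraph V) : ℕ :=
  sInf {k | Choosable G k}


lemma ncard_sub {α : Type*} {s : Set α} (h : s.Subsingleton) : s.ncard ≤ 1 := by
  rcases s.eq_empty_or_nonempty with rfl | ⟨a, ha⟩
  · simp
  · rw [h.eq_singleton_of_mem ha, Set.ncard_singleton]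

lemma ncard_pv_range {n : ℕ} [NeZero n] (f : ZMod n → ZMod n) (l : ZMod n) :
    {x : Vert n | ∃ k, x = Vert.pv k (f k) l}.ncard = n := by
  have h : {x : Vert n | ∃ k, x = Vert.pv k (f k) l} =
      Set.range (fun k => Vert.pv k (f k) l) := by
    ext v; simp [Set.range, eq_comm]
  rw [h, ← Nat.card_coe_set_eq, Nat.card_range_of_injective, Nat.card_zmod]
  intro a b hab
  simpa using congrArg (fun v => match v with | Vert.pv k _ _ => k | _ => 0) hab

lemma nbhd_qv {n : ℕ} (i : {x : ZMod n // x ≠ 0}) (j l : ZMod n) :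
    (GraphG n).neighborSet (Vert.qv i j) ∩ PlSet n l =
      {x | ∃ k, x = Vert.pv k (latinL n i.1 j k) l} := by
  ext v
  cases v <;> simp [GraphG, rel, PlSet, SimpleGraph.neighborSet, Vert.pv.injEq] <;> aesop

lemma nbhd_sv {n : ℕ} (m l : ZMod n) :
    (GraphG n).neighborSet (Vert.sv m) ∩ PlSet n l =
      {x | ∃ k, x = Vert.pv k m l} := by
  ext v
  cases v <;> simp [GraphG, rel, PlSet, SimpleGraph.neighborSet, Vert.pv.injEq] <;> aesop

lemma latin_key {n : ℕ} [Fact n.Prime] {i i' : ZMod n} (h : i ≠ i') {j j' k k' : ZMod n}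
    (e1 : latinL n i j k = latinL n i' j' k) (e2 : latinL n i j k' = latinL n i' j' k') :
    k = k' := by
  have h0 : (i - i') * (k - k') = 0 := by unfold latinL at e1 e2; linear_combination e1 - e2
  rcases mul_eq_zero.mp h0 with h1 | h1
  · exact absurd (sub_eq_zero.mp h1) h
  · exact sub_eq_zero.mp h1

lemma latin_key2 {n : ℕ} [Fact n.Prime] {i : ZMod n} (hi : i ≠ 0) {j m k k' : ZMod n}
    (e1 : latinL n i j k = m) (e2 : latinL n i j k' = m) : k = k' := by
  have h0 : i * (k - k') = 0 := by unfold latinL at e1 e2; linear_combination e1 - e2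
  rcases mul_eq_zero.mp h0 with h1 | h1
  · exact absurd h1 hi
  · exact sub_eq_zero.mp h1

/-- for fixed `l`, consider the family `𝓕_l = {N_G(x) ∩ P^l : x ∈ Q ∪ S}`
(of `n²` sets): each member has exactly `n` vertices and induces a complete graph `K_n`
in `G²`, and the members corresponding to distinct `x, y ∈ Q ∪ S` intersect in at most
one vertex (so the cliques are pairwise edge-disjoint). -/
theorem stmt_10 (n : ℕ) (hn : n.Prime) (hn3 : 3 ≤ n) (l : ZMod n) :
    (∀ x ∈ Qset n ∪ Sset n, ((GraphG n).neighborSet x ∩ PlSet n l).ncard = n) ∧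
    (∀ x ∈ Qset n ∪ Sset n, ∀ u ∈ (GraphG n).neighborSet x ∩ PlSet n l,
      ∀ v ∈ (GraphG n).neighborSet x ∩ PlSet n l, u ≠ v → (square (GraphG n)).Adj u v) ∧
    (∀ x ∈ Qset n ∪ Sset n, ∀ y ∈ Qset n ∪ Sset n, x ≠ y →
      (((GraphG n).neighborSet x ∩ PlSet n l) ∩
        ((GraphG n).neighborSet y ∩ PlSet n l)).ncard ≤ 1) := by
  haveI : Fact n.Prime := ⟨hn⟩
  refine ⟨?_, ?_, ?_⟩
  · rintro x (⟨i, j, rfl⟩ | ⟨m, rfl⟩)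
    · rw [nbhd_qv]; exact ncard_pv_range _ l
    · rw [nbhd_sv]; exact ncard_pv_range (fun _ => m) l
  · rintro x hx u hu v hv huv
    exact ⟨huv, Or.inr ⟨x, hu.1.symm, hv.1⟩⟩
  · rintro x (⟨i, j, rfl⟩ | ⟨m, rfl⟩) y (⟨i', j', rfl⟩ | ⟨m', rfl⟩) hxy <;> apply ncard_sub
    · rw [nbhd_qv, nbhd_qv]
      rintro a ⟨⟨k1, rfl⟩, ⟨k2, hk2⟩⟩ b ⟨⟨k3, rfl⟩, ⟨k4, hk4⟩⟩
      injection hk2 with h1 h2; subst h1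
      injection hk4 with h3 h4; subst h3
      by_cases hii : i.1 = i'.1
      · exfalso
        have hj : j = j' := by
          unfold latinL at h2; rw [hii] at h2; exact add_right_cancel h2
        exact hxy (by rw [Subtype.ext hii, hj])
      · have := latin_key hii h2 h4
        subst this; rfl
    · rw [nbhd_qv, nbhd_sv]
      rintro a ⟨⟨k1, rfl⟩, ⟨k2, hk2⟩⟩ b ⟨⟨k3, rfl⟩, ⟨k4, hk4⟩⟩
      injection hk2 with h1 h2; subst h1
      injection hk4 with h3 h4; subst h3
      have := latin_key2 i.2 h2 h4
      subst this; rfl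
    · rw [nbhd_sv, nbhd_qv]
      rintro a ⟨⟨k1, rfl⟩, ⟨k2, hk2⟩⟩ b ⟨⟨k3, rfl⟩, ⟨k4, hk4⟩⟩
      injection hk2 with h1 h2; subst h1
      injection hk4 with h3 h4; subst h3
      have := latin_key2 i'.2 h2.symm h4.symm
      subst this; rfl
    · rw [nbhd_sv, nbhd_sv]
      rintro a ⟨⟨k1, rfl⟩, ⟨k2, hk2⟩⟩ b hb
      injection hk2 with h1 h2
      exact absurd (by rw [h2]) hxy
end

section
/- For every integer M there exists a bipartite graph G such that χ_ℓ(G²) − χ(G²) > M, where G² is the square of G. In particular, there exists a bipartite graph G with χ_ℓ(G²) ≠ χ(G²), i.e., whose square is not chromatic-choosable. -/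
open SimpleGraph

lemma choosable_mono {V : Type*} (G : SimpleGraph V) {k k' : ℕ}
    (h : Choosable G k) (hk : k ≤ k') : Choosable G k' := fun L hL =>
  h L fun v => le_trans hk (hL v)

lemma greedy_aux {V : Type*} [DecidableEq V] (s : Finset V) :
    ∀ L : V → Finset ℕ, (∀ v, s.card ≤ (L v).card) →
    ∃ φ : V → ℕ, (∀ v ∈ s, φ v ∈ L v) ∧ Set.InjOn φ s := by
  induction s using Finset.cons_induction with
  | empty => exact fun L _ => ⟨fun _ => 0, by simp, by simp [Set.InjOn]⟩
  | cons a s ha ih =>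
    intro L hL
    obtain ⟨φ, hmem, hinj⟩ := ih L (fun v => by
      have := hL v; rw [Finset.card_cons] at this; omega)
    have hpos : 0 < (L a \ s.image φ).card := by
      have h1 := Finset.le_card_sdiff (s.image φ) (L a)
      have h2 : (s.image φ).card ≤ s.card := Finset.card_image_le
      have h3 := hL a
      rw [Finset.card_cons] at h3
      omega
    obtain ⟨c, hc⟩ := Finset.card_pos.mp hpos
    rw [Finset.mem_sdiff] at hc
    refine ⟨Function.update φ a c, ?_, ?_⟩
    · intro v hv
      rcases Finset.mem_cons.mp hv with rfl | hv2
      · simpa using hc.1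
      · rw [Function.update_of_ne (by rintro rfl; exact ha hv2)]
        exact hmem v hv2
    · intro x hx y hy hxy
      simp only [Finset.coe_cons, Set.mem_insert_iff, Finset.mem_coe] at hx hy
      rcases hx with rfl | hx <;> rcases hy with rfl | hy
      · rfl
      · exfalso; rw [Function.update_self, Function.update_of_ne (by rintro rfl; exact ha hy)] at hxy
        exact hc.2 (Finset.mem_image.mpr ⟨y, hy, hxy.symm⟩)
      · exfalso; rw [Function.update_self, Function.update_of_ne (by rintro rfl; exact ha hx)] at hxy
        exact hc.2 (Finset.mem_image.mpr ⟨x, hx, hxy⟩)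
      · rw [Function.update_of_ne (by rintro rfl; exact ha hx),
          Function.update_of_ne (by rintro rfl; exact ha hy)] at hxy
        exact hinj hx hy hxy

lemma choosable_card {V : Type*} [Fintype V] (G : SimpleGraph V) :
    Choosable G (Fintype.card V) := by
  classical
  intro L hL
  obtain ⟨φ, hmem, hinj⟩ := greedy_aux (Finset.univ : Finset V) L
    (fun v => by simpa using hL v)
  exact ⟨φ, fun v => hmem v (Finset.mem_univ v),
    fun v w hvw => fun h => G.ne_of_adj hvw (hinj (by simp) (by simp) h)⟩

section Aux
open Vert

/-! ### Fintype instance -/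

def vertEquiv (n : ℕ) : Vert n ≃
    (ZMod n × ZMod n × ZMod n) ⊕ ({x : ZMod n // x ≠ 0} × ZMod n) ⊕
      ({x : ZMod n // x ≠ 0} × ZMod n) ⊕ ZMod n where
  toFun v := match v with
    | .pv k m l => Sum.inl (k, m, l)
    | .qv i j => Sum.inr (Sum.inl (i, j))
    | .rv i j => Sum.inr (Sum.inr (Sum.inl (i, j)))
    | .sv m => Sum.inr (Sum.inr (Sum.inr m))
  invFun x := match x with
    | Sum.inl (k, m, l) => .pv k m l
    | Sum.inr (Sum.inl (i, j)) => .qv i j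
    | Sum.inr (Sum.inr (Sum.inl (i, j))) => .rv i j
    | Sum.inr (Sum.inr (Sum.inr m)) => .sv m
  left_inv v := by cases v <;> rfl
  right_inv x := by rcases x with ⟨k, m, l⟩ | ⟨i, j⟩ | ⟨i, j⟩ | m <;> rfl

noncomputable instance vertFintype (n : ℕ) [NeZero n] : Fintype (Vert n) :=
  Fintype.ofEquiv _ (vertEquiv n).symm

/-! ### Adjacency lemmas for the square -/

lemma latin_solve {n : ℕ} [Fact n.Prime] {m m' a a' : ZMod n} (hm : m ≠ m') (ha : a ≠ a') :
    ∃ i j : ZMod n, i ≠ 0 ∧ m = latinL n i j a ∧ m' = latinL n i j a' := by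
  have h2 : a - a' ≠ 0 := sub_ne_zero.mpr ha
  refine ⟨(m - m') / (a - a'), m - (m - m') / (a - a') * (a - 1), ?_, ?_, ?_⟩
  · exact div_ne_zero (sub_ne_zero.mpr hm) h2
  · unfold latinL; ring
  · unfold latinL
    have key : (m - m') / (a - a') * (a - a') = m - m' := div_mul_cancel₀ _ h2
    linear_combination key

lemma adj_pp {n : ℕ} [Fact n.Prime] {k m l k' m' l' : ZMod n} (h : k ≠ k' ∨ l ≠ l') :
    (square (GraphG n)).Adj (.pv k m l) (.pv k' m' l') := by
  have hne : (Vert.pv k m l : Vert n) ≠ .pv k' m' l' := by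
    intro he
    injection he with h1 h2 h3
    rcases h with h | h
    · exact h h1
    · exact h h3
  refine ⟨hne, Or.inr ?_⟩
  by_cases hm : m = m'
  · subst hm
    exact ⟨.sv m, Or.inr (show m = m from rfl), Or.inl (show m = m from rfl)⟩
  · rcases h with hk | hl
    · obtain ⟨i, j, hi, h1, h2⟩ := latin_solve hm hk
      exact ⟨.qv ⟨i, hi⟩ j, Or.inr h1, Or.inl h2⟩
    · obtain ⟨i, j, hi, h1, h2⟩ := latin_solve hm hl
      exact ⟨.rv ⟨i, hi⟩ j, Or.inr h1, Or.inl h2⟩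

lemma not_adj_pp {n : ℕ} {k m l m' : ZMod n} :
    ¬ (square (GraphG n)).Adj (.pv k m l) (.pv k m' l) := by
  rintro ⟨hne, hadj | ⟨z, hz1, hz2⟩⟩
  · rcases hadj with h | h <;> exact h
  · have hz2' : rel z (Vert.pv k m' l) := by
      rcases hz2 with h | h
      · exact h
      · cases z <;> exact h.elim
    have hz1' : rel z (Vert.pv k m l) := by
      rcases hz1 with h | h
      · cases z <;> exact h.elim
      · exact h
    cases z with
    | pv a b c => exact hz1'
    | qv i j =>
      exact hne (by rw [show m = latinL n i.1 j k from hz1', show m' = latinL n i.1 j k from hz2'])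
    | rv i j =>
      exact hne (by rw [show m = latinL n i.1 j l from hz1', show m' = latinL n i.1 j l from hz2'])
    | sv m'' =>
      exact hne (by rw [show m = m'' from hz1', show m' = m'' from hz2'])

lemma adj_qq_eq {n : ℕ} {i i' : {x : ZMod n // x ≠ 0}} {j j' : ZMod n}
    (hii : i = i') (h : (square (GraphG n)).Adj (.qv i j) (.qv i' j')) : False := by
  subst hii
  obtain ⟨hne, hadj | ⟨z, hz1, hz2⟩⟩ := h
  · rcases hadj with h | h <;> exact h
  · have hz1' : rel (Vert.qv i j) z := by
      rcases hz1 with h | h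
      · exact h
      · cases z <;> exact h.elim
    have hz2' : rel (Vert.qv i j') z := by
      rcases hz2 with h | h
      · cases z <;> exact h.elim
      · exact h
    cases z with
    | pv a b c =>
      have e1 : b = latinL n i.1 j a := hz1'
      have e2 : b = latinL n i.1 j' a := hz2'
      have : j = j' := by
        have := e1.symm.trans e2
        unfold latinL at this
        exact add_right_cancel this
      exact hne (by rw [this])
    | qv _ _ => exact hz1'
    | rv _ _ => exact hz1'
    | sv _ => exact hz1'

lemma adj_rr_eq {n : ℕ} {i i' : {x : ZMod n // x ≠ 0}} {j j' : ZMod n}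
    (hii : i = i') (h : (square (GraphG n)).Adj (.rv i j) (.rv i' j')) : False := by
  subst hii
  obtain ⟨hne, hadj | ⟨z, hz1, hz2⟩⟩ := h
  · rcases hadj with h | h <;> exact h
  · have hz1' : rel (Vert.rv i j) z := by
      rcases hz1 with h | h
      · exact h
      · cases z <;> exact h.elim
    have hz2' : rel (Vert.rv i j') z := by
      rcases hz2 with h | h
      · cases z <;> exact h.elim
      · exact h
    cases z with
    | pv a b c =>
      have e1 : b = latinL n i.1 j c := hz1'
      have e2 : b = latinL n i.1 j' c := hz2'
      have : j = j' := by
        have := e1.symm.trans e2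
        unfold latinL at this
        exact add_right_cancel this
      exact hne (by rw [this])
    | qv _ _ => exact hz1'
    | rv _ _ => exact hz1'
    | sv _ => exact hz1'

lemma adj_ss {n : ℕ} {m m' : ZMod n}
    (h : (square (GraphG n)).Adj (.sv m) (.sv m')) : False := by
  obtain ⟨hne, hadj | ⟨z, hz1, hz2⟩⟩ := h
  · rcases hadj with h | h <;> exact h
  · have hz1' : rel (Vert.sv m) z := by
      rcases hz1 with h | h
      · exact h
      · cases z <;> exact h.elim
    have hz2' : rel (Vert.sv m') z := by
      rcases hz2 with h | h
      · cases z <;> exact h.elim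
      · exact h
    cases z with
    | pv a b c =>
      have e1 : b = m := hz1'
      have e2 : b = m' := hz2'
      exact hne (by rw [← e1, e2])
    | qv _ _ => exact hz1'
    | rv _ _ => exact hz1'
    | sv _ => exact hz1'

/-! ### A proper coloring of the square with `n² + 2n - 1` colors -/

def colorV (n : ℕ) : Vert n → ℕ
  | .pv k _ l => k.val * n + l.val
  | .qv i _ => n^2 + (i.1.val - 1)
  | .rv i _ => n^2 + (n - 1) + (i.1.val - 1)
  | .sv _ => n^2 + 2*n - 2

lemma colorV_lt (n : ℕ) [Fact n.Prime] (v : Vert n) : colorV n v < n^2 + 2*n - 1 := by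
  have hn : 2 ≤ n := (Fact.out : n.Prime).two_le
  cases v with
  | pv k m l =>
    have h1 : k.val < n := ZMod.val_lt k
    have h2 : l.val < n := ZMod.val_lt l
    have : k.val * n + l.val < n^2 := by nlinarith
    simp only [colorV]; omega
  | qv i j => have := ZMod.val_lt i.1; simp only [colorV]; omega
  | rv i j => have := ZMod.val_lt i.1; simp only [colorV]; omega
  | sv m => simp only [colorV]; omega

lemma val_one_le {n : ℕ} [Fact n.Prime] (i : {x : ZMod n // x ≠ 0}) : 1 ≤ i.1.val := by
  rcases Nat.eq_zero_or_pos i.1.val with h | h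
  · exact absurd ((ZMod.val_eq_zero i.1).mp h) i.2
  · exact h

lemma pv_lt {n : ℕ} [Fact n.Prime] (k l : ZMod n) : k.val * n + l.val < n^2 := by
  have h1 : k.val < n := ZMod.val_lt k
  have h2 : l.val < n := ZMod.val_lt l
  nlinarith

lemma colorV_classify {n : ℕ} [Fact n.Prime] :
    ∀ x y : Vert n, colorV n x = colorV n y → ¬ (square (GraphG n)).Adj x y := by
  have hn : 2 ≤ n := (Fact.out : n.Prime).two_le
  intro x y he hadj
  cases x with
  | pv k m l =>
    cases y with
    | pv k' m' l' =>
      simp only [colorV] at he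
      have h1 : l.val < n := ZMod.val_lt l
      have h2 : l'.val < n := ZMod.val_lt l'
      have e1 : l.val = l'.val := by
        have c1 : (k.val * n + l.val) % n = l.val := by
          rw [Nat.mul_comm, Nat.mul_add_mod, Nat.mod_eq_of_lt h1]
        have c2 : (k'.val * n + l'.val) % n = l'.val := by
          rw [Nat.mul_comm, Nat.mul_add_mod, Nat.mod_eq_of_lt h2]
        rw [← c1, ← c2, he]
      have e2 : k.val = k'.val := by
        have : k.val * n = k'.val * n := by omega
        exact Nat.eq_of_mul_eq_mul_right (by omega) this
      have ek : k = k' := ZMod.val_injective n e2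
      have el : l = l' := ZMod.val_injective n e1
      subst ek; subst el
      exact not_adj_pp hadj
    | qv i' j' => simp only [colorV] at he; have := pv_lt (n := n) k l; omega
    | rv i' j' => simp only [colorV] at he; have := pv_lt (n := n) k l; omega
    | sv m' => simp only [colorV] at he; have := pv_lt (n := n) k l; omega
  | qv i j =>
    cases y with
    | pv k' m' l' => simp only [colorV] at he; have := pv_lt (n := n) k' l'; omega
    | qv i' j' =>
      simp only [colorV] at he
      have h1 := val_one_le i
      have h2 := val_one_le i'
      have : i.1.val = i'.1.val := by omega
      exact adj_qq_eq (Subtype.ext (ZMod.val_injective n this)) hadj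
    | rv i' j' =>
      simp only [colorV] at he
      have h1 := val_one_le i'
      have h2 : i.1.val < n := ZMod.val_lt i.1
      omega
    | sv m' =>
      simp only [colorV] at he
      have h2 : i.1.val < n := ZMod.val_lt i.1
      omega
  | rv i j =>
    cases y with
    | pv k' m' l' => simp only [colorV] at he; have := pv_lt (n := n) k' l'; omega
    | qv i' j' =>
      simp only [colorV] at he
      have h1 := val_one_le i
      have h2 : i'.1.val < n := ZMod.val_lt i'.1
      omega
    | rv i' j' =>
      simp only [colorV] at he
      have h1 := val_one_le i
      have h2 := val_one_le i'
      have : i.1.val = i'.1.val := by omega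
      exact adj_rr_eq (Subtype.ext (ZMod.val_injective n this)) hadj
    | sv m' =>
      simp only [colorV] at he
      have h1 := val_one_le i
      have h2 : i.1.val < n := ZMod.val_lt i.1
      omega
  | sv m =>
    cases y with
    | pv k' m' l' => simp only [colorV] at he; have := pv_lt (n := n) k' l'; omega
    | qv i' j' =>
      simp only [colorV] at he
      have h2 : i'.1.val < n := ZMod.val_lt i'.1
      omega
    | rv i' j' =>
      simp only [colorV] at he
      have h1 := val_one_le i'
      have h2 : i'.1.val < n := ZMod.val_lt i'.1
      omega
    | sv m' => exact adj_ss hadj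

lemma colorable_square (n : ℕ) [Fact n.Prime] :
    (square (GraphG n)).Colorable (n^2 + 2*n - 1) := by
  refine ⟨SimpleGraph.Coloring.mk (fun v => (⟨colorV n v, colorV_lt n v⟩ : Fin _)) ?_⟩
  intro u v h he
  exact colorV_classify u v (congrArg Fin.val he) h

def bip {n : ℕ} : Vert n → Fin 2
  | .pv _ _ _ => 0
  | .qv _ _ => 1
  | .rv _ _ => 1
  | .sv _ => 1

lemma colorable2 (n : ℕ) : (GraphG n).Colorable 2 := by
  refine ⟨SimpleGraph.Coloring.mk bip ?_⟩
  intro u v h he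
  cases u <;> cases v <;>
    first
      | (rcases h with h | h <;> exact h)
      | simp [bip] at he

/-! ### A bad list assignment -/

def badL (n : ℕ) : Vert n → Finset ℕ
  | .pv _ m _ => Finset.range (2*n^2 - 1) \ Finset.Ico (2*n*m.val) (2*n*m.val + 2*n)
  | .qv _ _ => Finset.range (2*n^2 - 1)
  | .rv _ _ => Finset.range (2*n^2 - 1)
  | .sv _ => Finset.range (2*n^2 - 1)

lemma badL_card (n : ℕ) [Fact n.Prime] (v : Vert n) :
    2*n^2 - 1 - 2*n ≤ (badL n v).card := by
  have hn : 2 ≤ n := (Fact.out : n.Prime).two_le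
  cases v with
  | pv k m l =>
    have h := Finset.le_card_sdiff (Finset.Ico (2*n*m.val) (2*n*m.val + 2*n))
      (Finset.range (2*n^2 - 1))
    rw [Finset.card_range, Nat.card_Ico] at h
    simp only [badL]
    omega
  | qv i j => simp [badL]
  | rv i j => simp [badL]
  | sv m => simp [badL]

lemma cover {n : ℕ} [Fact n.Prime] {c : ℕ} (hc : c < 2*n^2 - 1) :
    ∃ m : ZMod n, c ∈ Finset.Ico (2*n*m.val) (2*n*m.val + 2*n) := by
  have hn : 2 ≤ n := (Fact.out : n.Prime).two_le
  have h2n : 0 < 2*n := by omega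
  refine ⟨((c / (2*n) : ℕ) : ZMod n), ?_⟩
  have hlt : c / (2*n) < n := by
    rw [Nat.div_lt_iff_lt_mul h2n]
    have h1 : 2*n^2 = n*(2*n) := by ring
    omega
  rw [ZMod.val_cast_of_lt hlt]
  have he := Nat.div_add_mod c (2*n)
  have hm := Nat.mod_lt c h2n
  simp only [Finset.mem_Ico]
  omega

lemma not_choosable (n : ℕ) [Fact n.Prime] :
    ¬ Choosable (square (GraphG n)) (2*n^2 - 1 - 2*n) := by
  have hn : 2 ≤ n := (Fact.out : n.Prime).two_le
  intro hch
  obtain ⟨φ, hmem, hprop⟩ := hch (badL n) (badL_card n)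
  classical
  set U : ZMod n × ZMod n → Finset ℕ :=
    fun p => Finset.image (fun m => φ (Vert.pv p.1 m p.2)) Finset.univ with hU
  have hdisj : ∀ p ∈ (Finset.univ : Finset (ZMod n × ZMod n)), ∀ q ∈ Finset.univ,
      p ≠ q → Disjoint (U p) (U q) := by
    intro p _ q _ hpq
    rw [Finset.disjoint_left]
    intro c hcp hcq
    obtain ⟨a, _, ha⟩ := Finset.mem_image.mp hcp
    obtain ⟨b, _, hb⟩ := Finset.mem_image.mp hcq
    have hadj : (square (GraphG n)).Adj (.pv p.1 a p.2) (.pv q.1 b q.2) := by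
      apply adj_pp
      by_contra hcon
      push_neg at hcon
      exact hpq (Prod.ext hcon.1 hcon.2)
    exact hprop hadj (by rw [ha, hb])
  have hcard2 : ∀ p : ZMod n × ZMod n, 2 ≤ (U p).card := by
    intro p
    by_contra hlt
    push_neg at hlt
    have hne : (U p).Nonempty := Finset.Nonempty.image Finset.univ_nonempty _
    have hpos : 1 ≤ (U p).card := Finset.card_pos.mpr hne
    have h1 : (U p).card = 1 := by omega
    obtain ⟨c, hc⟩ := Finset.card_eq_one.mp h1
    have hall : ∀ m : ZMod n, φ (Vert.pv p.1 m p.2) = c := by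
      intro m
      have hx : φ (Vert.pv p.1 m p.2) ∈ U p :=
        Finset.mem_image_of_mem _ (Finset.mem_univ m)
      rw [hc] at hx
      exact Finset.mem_singleton.mp hx
    have hcrange : c < 2*n^2 - 1 := by
      have hx := hmem (Vert.pv p.1 0 p.2)
      simp only [badL, Finset.mem_sdiff, Finset.mem_range] at hx
      rw [hall 0] at hx
      exact hx.1
    obtain ⟨m, hm⟩ := cover hcrange
    have hx := hmem (Vert.pv p.1 m p.2)
    simp only [badL, Finset.mem_sdiff] at hx
    rw [hall m] at hx
    exact hx.2 hm
  have hsum : (Finset.univ.biUnion U).card = ∑ p, (U p).card := Finset.card_biUnion hdisj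
  have hsub : Finset.univ.biUnion U ⊆ Finset.range (2*n^2 - 1) := by
    intro c hcmem
    obtain ⟨p, _, hcp⟩ := Finset.mem_biUnion.mp hcmem
    obtain ⟨a, _, ha⟩ := Finset.mem_image.mp hcp
    have hx := hmem (Vert.pv p.1 a p.2)
    simp only [badL, Finset.mem_sdiff] at hx
    rw [ha] at hx
    exact hx.1
  have hge : 2 * (n * n) ≤ ∑ p : ZMod n × ZMod n, (U p).card := by
    calc 2 * (n * n) = ∑ _p : ZMod n × ZMod n, 2 := by
          rw [Finset.sum_const, smul_eq_mul]
          simp [ZMod.card n, mul_comm]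
      _ ≤ ∑ p : ZMod n × ZMod n, (U p).card :=
          Finset.sum_le_sum (fun p _ => hcard2 p)
  have hle : (Finset.univ.biUnion U).card ≤ 2*n^2 - 1 := by
    have := Finset.card_le_card hsub
    rwa [Finset.card_range] at this
  have hsq : 2*n^2 - 1 = 2*(n*n) - 1 := by rw [sq]
  have key : 2*(n*n) ≤ 2*(n*n) - 1 := by
    calc 2*(n*n) ≤ ∑ p : ZMod n × ZMod n, (U p).card := hge
      _ = (Finset.univ.biUnion U).card := hsum.symm
      _ ≤ 2*n^2 - 1 := hle
      _ = 2*(n*n) - 1 := hsq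
  have h1 : 1 ≤ n*n := Nat.mul_pos (by omega) (by omega)
  obtain ⟨A, hA⟩ : ∃ A, A = n*n := ⟨_, rfl⟩
  rw [← hA] at key h1
  omega

/-! ### Putting everything together -/

lemma listChrom_ge (n : ℕ) [Fact n.Prime] :
    2*n^2 - 2*n ≤ listChromaticNumber (square (GraphG n)) := by
  have hn : 2 ≤ n := (Fact.out : n.Prime).two_le
  have hn2 : 2 ≤ n^2 := by nlinarith
  have hne : {k | Choosable (square (GraphG n)) k}.Nonempty :=
    ⟨Fintype.card (Vert n), choosable_card _⟩
  have hmem := Nat.sInf_mem hne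
  unfold listChromaticNumber
  by_contra hlt
  push_neg at hlt
  exact not_choosable n (choosable_mono _ hmem (by omega))

lemma chromToNat_le (n : ℕ) [Fact n.Prime] :
    (square (GraphG n)).chromaticNumber.toNat ≤ n^2 + 2*n - 1 := by
  have hchle : (square (GraphG n)).chromaticNumber ≤ ((n^2 + 2*n - 1 : ℕ) : ℕ∞) :=
    (colorable_square n).chromaticNumber_le
  have hne : (square (GraphG n)).chromaticNumber ≠ ⊤ :=
    (lt_of_le_of_lt hchle (ENat.coe_lt_top _)).ne
  have := ENat.coe_toNat hne
  rw [← this] at hchle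
  exact_mod_cast hchle

theorem stmt_19' :
    (∀ M : ℤ, ∃ (V : Type) (G : SimpleGraph V), G.Colorable 2 ∧
      M < (listChromaticNumber (square G) : ℤ) -
        ((square G).chromaticNumber.toNat : ℤ)) ∧
    ∃ (V : Type) (G : SimpleGraph V), G.Colorable 2 ∧
      (listChromaticNumber (square G) : ℕ∞) ≠ (square G).chromaticNumber := by
  constructor
  · intro M
    obtain ⟨n, hge5, hp⟩ := Nat.exists_infinite_primes (M.toNat + 5)
    haveI : Fact n.Prime := ⟨hp⟩
    have hn : 2 ≤ n := hp.two_le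
    refine ⟨Vert n, GraphG n, colorable2 n, ?_⟩
    have h1 := listChrom_ge n
    have h2 := chromToNat_le n
    have hsub : 2*n ≤ 2*n^2 := by nlinarith
    have hz1 : (2*(n:ℤ)^2 - 2*(n:ℤ)) ≤ (listChromaticNumber (square (GraphG n)) : ℤ) := by
      have h := Int.ofNat_le.mpr h1
      rw [Nat.cast_sub hsub] at h
      push_cast at h
      exact h
    have hz2 : (((square (GraphG n)).chromaticNumber.toNat : ℤ)) ≤
        ((n:ℤ)^2 + 2*(n:ℤ) - 1) := by
      have h := Int.ofNat_le.mpr h2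
      rw [Nat.cast_sub (by nlinarith : 1 ≤ n^2 + 2*n)] at h
      push_cast at h
      exact h
    have hM : M ≤ (M.toNat : ℤ) := Int.self_le_toNat M
    have hMn : ((M.toNat : ℤ) + 5) ≤ (n : ℤ) := by exact_mod_cast hge5
    have hn5 : (5:ℤ) ≤ (n:ℤ) := by linarith
    nlinarith
  · haveI : Fact (Nat.Prime 5) := ⟨by norm_num⟩
    refine ⟨Vert 5, GraphG 5, colorable2 5, ?_⟩
    intro heq
    have h1 := listChrom_ge 5
    have hcol : (square (GraphG 5)).chromaticNumber ≤ ((5^2 + 2*5 - 1 : ℕ) : ℕ∞) :=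
      (colorable_square 5).chromaticNumber_le
    have h40 : ((40:ℕ) : ℕ∞) ≤ (listChromaticNumber (square (GraphG 5)) : ℕ∞) := by
      exact_mod_cast Nat.cast_le.mpr (by norm_num at h1 ⊢; exact h1)
    rw [heq] at h40
    have : ((40:ℕ) : ℕ∞) ≤ ((34 : ℕ) : ℕ∞) := le_trans h40 (by norm_num at hcol ⊢; exact_mod_cast hcol)
    rw [Nat.cast_le] at this
    omega

end Aux

/-- for every integer `M` there is a bipartite (2-colorable) graph `G` with
`χ_ℓ(G²) - χ(G²) > M`; in particular there is a bipartite graph `G` whose square is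
not chromatic-choosable, i.e. `χ_ℓ(G²) ≠ χ(G²)`. -/
theorem stmt_19 :
    (∀ M : ℤ, ∃ (V : Type) (G : SimpleGraph V), G.Colorable 2 ∧
      M < (listChromaticNumber (square G) : ℤ) -
        ((square G).chromaticNumber.toNat : ℤ)) ∧
    ∃ (V : Type) (G : SimpleGraph V), G.Colorable 2 ∧
      (listChromaticNumber (square G) : ℕ∞) ≠ (square G).chromaticNumber := by
  exact stmt_19'
end
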